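/- arXiv:0903.3814 — 2 statements merged into one kernel-verified Lean document; each statement's English description precedes it below -/
import Mathlib

section
/- Let W be a vector space with basis {β_k, γ_k : k ≥ 0}. For w ≥ 1 and k ≥ 0 define linear operators J^{w+k}(k) on W by J^{w+k}(k)(β_l) = λ^w_{k,l} β_{l+w} and J^{w+k}(k)(γ_l) = μ^w_{k,l} γ_{l+w}, where λ^w_{k,l} = −l!/(l−k)! for l ≥ k and 0 otherwise, and μ^w_{k,l} = (−1)^{w+k}(w+k+l)!/(l+w)!. Let φ: W → W be any linear map satisfying φ(γ_l) = c_l γ_{l+w} and φ(β_l) = d_l β_{l+w} for arbitrary constants c_l, d_l ∈ ℂ. Then for every m ≥ 0, the restriction of φ to the subspace W_m spanned by {β_k, γ_k : 0 ≤ k ≤ m} can be expressed uniquely as a linear combination of the restrictions of J^{w+k}(k) to W_m, for 0 ≤ k ≤ 2m+1. -/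
/-- The vector space `W` with basis `{β_k, γ_k : k ≥ 0}`: `β_k` is indexed by `Sum.inl k`
and `γ_k` by `Sum.inr k`. -/
abbrev Wsp : Type := (ℕ ⊕ ℕ) →₀ ℂ

/-- The basis vector `β_k`. -/
noncomputable def bβ (k : ℕ) : Wsp := Finsupp.single (Sum.inl k) 1

/-- The basis vector `γ_k`. -/
noncomputable def bγ (k : ℕ) : Wsp := Finsupp.single (Sum.inr k) 1

/-- `λ^w_{k,l} = −l!/(l−k)!` if `l ≥ k`, else `0`. -/
noncomputable def lam (k l : ℕ) : ℂ :=
  if k ≤ l then -((l.factorial : ℂ) / ((l - k).factorial : ℂ)) else 0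

/-- `μ^w_{k,l} = (−1)^{w+k}(w+k+l)!/(l+w)!`. -/
noncomputable def mu (w k l : ℕ) : ℂ :=
  (-1 : ℂ) ^ (w + k) * ((w + k + l).factorial : ℂ) / ((l + w).factorial : ℂ)

/-- The operator `J^{w+k}(k)`, acting by `β_l ↦ λ^w_{k,l} β_{l+w}`, `γ_l ↦ μ^w_{k,l} γ_{l+w}`. -/
noncomputable def Jop (w k : ℕ) : Wsp →ₗ[ℂ] Wsp :=
  Finsupp.lift Wsp ℂ (ℕ ⊕ ℕ) fun s =>
    match s with
    | Sum.inl l => lam k l • bβ (l + w)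
    | Sum.inr l => mu w k l • bγ (l + w)

/-- The subspace `W_m` spanned by `{β_k, γ_k : 0 ≤ k ≤ m}`. -/
noncomputable def Wm (m : ℕ) : Submodule ℂ Wsp :=
  Submodule.span ℂ {x | ∃ k ≤ m, x = bβ k ∨ x = bγ k}

section Aux
open Polynomial Finset

lemma lam_eq_prod (k l : ℕ) : lam k l = -(∏ i ∈ range k, ((l : ℂ) - i)) := by
  unfold lam
  split_ifs with h
  · have h1 : (∏ i ∈ range k, ((l : ℂ) - i)) = ((l.descFactorial k : ℕ) : ℂ) := by
      rw [Nat.descFactorial_eq_prod_range, Nat.cast_prod]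
      refine Finset.prod_congr rfl fun i hi => ?_
      have : i ≤ l := le_trans (le_of_lt (Finset.mem_range.mp hi)) h
      push_cast [this]
      ring
    rw [h1]
    have h2 := Nat.factorial_mul_descFactorial h
    have h3 : ((l-k).factorial : ℂ) ≠ 0 := Nat.cast_ne_zero.mpr (Nat.factorial_ne_zero _)
    field_simp
    rw [mul_comm]
    rw [← h2]; push_cast; ring
  · push_neg at h
    rw [Finset.prod_eq_zero (Finset.mem_range.mpr h)]
    · simp
    · simp

lemma fact_aux (a : ℕ) : ∀ k : ℕ, (((a + k).factorial : ℕ) : ℂ) = (a.factorial : ℂ) * ∏ i ∈ range k, ((a : ℂ) + 1 + i) := by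
  intro k
  induction k with
  | zero => simp
  | succ k ih =>
    rw [Finset.prod_range_succ, ← mul_assoc, ← ih]
    have : a + (k + 1) = (a + k) + 1 := by ring
    rw [this, Nat.factorial_succ]
    push_cast
    ring

lemma mu_eq_prod (w k l : ℕ) :
    mu w k l = (-1 : ℂ) ^ (w + k) * ∏ i ∈ range k, ((l : ℂ) + w + 1 + i) := by
  unfold mu
  have h0 : w + k + l = (l + w) + k := by ring
  rw [h0, fact_aux (l + w) k]
  have h3 : (((l+w).factorial : ℕ) : ℂ) ≠ 0 := Nat.cast_ne_zero.mpr (Nat.factorial_ne_zero _)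
  field_simp
  ring_nf
  exact Finset.prod_congr rfl fun x _ => by push_cast <;> ring

noncomputable def pPoly (k : ℕ) : Polynomial ℂ := -(∏ i ∈ range k, (X - C (i : ℂ)))

lemma pPoly_eval (k : ℕ) (x : ℂ) : (pPoly k).eval x = -(∏ i ∈ range k, (x - i)) := by
  simp [pPoly, eval_prod]

lemma pPoly_natDegree (k : ℕ) : (pPoly k).natDegree = k := by
  rw [pPoly, natDegree_neg, natDegree_prod]
  · simp only [natDegree_X_sub_C]
    simp
  · intro i _; exact X_sub_C_ne_zero _

lemma pPoly_coeff_self (k : ℕ) : (pPoly k).coeff k = -1 := by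
  have hm : (∏ i ∈ range k, (X - C (i : ℂ))).Monic :=
    monic_prod_of_monic _ _ fun i _ => monic_X_sub_C _
  have hd : (∏ i ∈ range k, (X - C (i : ℂ))).natDegree = k := by
    have := pPoly_natDegree k
    rwa [pPoly, natDegree_neg] at this
  have := hm.coeff_natDegree
  rw [hd] at this
  rw [pPoly, coeff_neg, this]

lemma pPoly_eval_nat (k l : ℕ) : (pPoly k).eval (l : ℂ) = lam k l := by
  rw [pPoly_eval, lam_eq_prod]

lemma pPoly_eval_neg (w k l : ℕ) :
    (pPoly k).eval (-(l : ℂ) - w - 1) = -((-1 : ℂ) ^ w) * mu w k l := by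
  rw [pPoly_eval, mu_eq_prod]
  have h1 : ∏ i ∈ range k, ((-(l : ℂ) - w - 1) - i)
      = (-1 : ℂ) ^ k * ∏ i ∈ range k, ((l : ℂ) + w + 1 + i) := by
    calc ∏ i ∈ range k, ((-(l : ℂ) - w - 1) - i)
        = ∏ i ∈ range k, (-1 : ℂ) * ((l : ℂ) + w + 1 + i) :=
          Finset.prod_congr rfl fun i _ => by ring
      _ = (-1 : ℂ) ^ k * ∏ i ∈ range k, ((l : ℂ) + w + 1 + i) := by
          rw [Finset.prod_mul_distrib, Finset.prod_const, card_range]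
  rw [h1]
  have h2 : ((-1 : ℂ)) ^ w * (-1 : ℂ) ^ (w + k) = (-1 : ℂ) ^ k := by
    rw [← pow_add]
    have : w + (w + k) = 2 * w + k := by ring
    rw [this, pow_add, pow_mul]
    simp
  rw [← h2]
  ring

lemma key (w m : ℕ) (t : Fin (2*m+2) → ℂ)
    (hb : ∀ l ≤ m, ∑ k : Fin (2*m+2), t k * lam (k : ℕ) l = 0)
    (hc : ∀ l ≤ m, ∑ k : Fin (2*m+2), t k * mu w (k : ℕ) l = 0) : t = 0 := by
  set P : Polynomial ℂ := ∑ k : Fin (2*m+2), C (t k) * pPoly (k : ℕ) with hP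
  have hPeval : ∀ x : ℂ, P.eval x = ∑ k : Fin (2*m+2), t k * (pPoly (k : ℕ)).eval x := by
    intro x
    rw [hP, eval_finset_sum]
    exact Finset.sum_congr rfl fun k _ => by rw [eval_mul, eval_C]
  have hs1 : ∀ l : ℕ, l ≤ m → P.eval (l : ℂ) = 0 := by
    intro l hl
    rw [hPeval]
    rw [← hb l hl]
    exact Finset.sum_congr rfl fun k _ => by rw [pPoly_eval_nat]
  have hs2 : ∀ l : ℕ, l ≤ m → P.eval (-(l : ℂ) - w - 1) = 0 := by
    intro l hl
    rw [hPeval]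
    have : ∑ k : Fin (2*m+2), t k * (pPoly (k:ℕ)).eval (-(l : ℂ) - w - 1)
        = -((-1:ℂ)^w) * ∑ k : Fin (2*m+2), t k * mu w (k:ℕ) l := by
      rw [Finset.mul_sum]
      exact Finset.sum_congr rfl fun k _ => by rw [pPoly_eval_neg]; ring
    rw [this, hc l hl, mul_zero]
  -- root set
  set s : Finset ℂ := (range (m+1)).image (fun l : ℕ => (l : ℂ)) ∪
      (range (m+1)).image (fun l : ℕ => -(l : ℂ) - w - 1) with hs
  have hinj1 : Function.Injective (fun l : ℕ => (l : ℂ)) := Nat.cast_injective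
  have hinj2 : Function.Injective (fun l : ℕ => -(l : ℂ) - w - 1) := by
    intro a b h
    simp only at h
    have : (a : ℂ) = (b : ℂ) := by linear_combination -h
    exact_mod_cast this
  have hdis : Disjoint ((range (m+1)).image (fun l : ℕ => (l : ℂ)))
      ((range (m+1)).image (fun l : ℕ => -(l : ℂ) - w - 1)) := by
    rw [Finset.disjoint_left]
    rintro x hx1 hx2
    obtain ⟨a, _, ha⟩ := Finset.mem_image.mp hx1
    obtain ⟨b, _, hbb⟩ := Finset.mem_image.mp hx2
    have h0 : ((a + b + w + 1 : ℕ) : ℂ) = 0 := by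
      push_cast
      linear_combination ha - hbb
    have : a + b + w + 1 = 0 := by exact_mod_cast h0
    omega
  have hcard : #s = 2*m+2 := by
    rw [hs, Finset.card_union_of_disjoint hdis, Finset.card_image_of_injective _ hinj1,
      Finset.card_image_of_injective _ hinj2, card_range]
    omega
  have hdeg : P.natDegree < 2*m+2 := by
    have : P.natDegree ≤ 2*m+1 := by
      refine natDegree_sum_le_of_forall_le _ _ fun k _ => ?_
      refine le_trans (natDegree_mul_le) ?_
      rw [natDegree_C, pPoly_natDegree]
      have := k.isLt
      omega
    omega
  have hP0 : P = 0 := by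
    refine eq_zero_of_natDegree_lt_card_of_eval_eq_zero' P s ?_ ?_
    · intro x hx
      rw [hs, Finset.mem_union] at hx
      rcases hx with hx | hx
      · obtain ⟨a, ha1, ha2⟩ := Finset.mem_image.mp hx
        rw [← ha2]
        exact hs1 a (by have := Finset.mem_range.mp ha1; omega)
      · obtain ⟨a, ha1, ha2⟩ := Finset.mem_image.mp hx
        rw [← ha2]
        exact hs2 a (by have := Finset.mem_range.mp ha1; omega)
    · omega
  -- coefficients
  have hz : ∀ N : ℕ, ∀ j : Fin (2*m+2), 2*m+2 ≤ (j : ℕ) + N → t j = 0 := by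
    intro N
    induction N with
    | zero => intro j hj; exact absurd j.isLt (by omega)
    | succ N ih =>
      intro j hj
      have hcoeff : P.coeff (j : ℕ) = 0 := by rw [hP0]; simp
      rw [hP, finset_sum_coeff] at hcoeff
      have hsingle : ∑ k : Fin (2*m+2), (C (t k) * pPoly (k:ℕ)).coeff (j : ℕ)
          = (C (t j) * pPoly (j:ℕ)).coeff (j : ℕ) := by
        refine Finset.sum_eq_single j (fun k _ hk => ?_) (fun h => absurd (Finset.mem_univ j) h)
        rw [coeff_C_mul]
        rcases lt_or_gt_of_ne (fun h : (k:ℕ) = (j:ℕ) => hk (Fin.ext h)) with h | h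
        · rw [coeff_eq_zero_of_natDegree_lt (by rw [pPoly_natDegree]; exact h), mul_zero]
        · rw [ih k (by omega), zero_mul]
      rw [hsingle, coeff_C_mul, pPoly_coeff_self] at hcoeff
      have := hcoeff
      simpa using this
  funext j
  exact hz (2*m+2) j (by omega)

end Aux


lemma Jop_bβ (w k l : ℕ) : Jop w k (bβ l) = lam k l • bβ (l + w) := by
  simp [Jop, bβ, Finsupp.lift_apply, Finsupp.sum_single_index]

lemma Jop_bγ (w k l : ℕ) : Jop w k (bγ l) = mu w k l • bγ (l + w) := by
  simp [Jop, bγ, Finsupp.lift_apply, Finsupp.sum_single_index]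

lemma Jop_bβ_apply (w k l : ℕ) : (Jop w k (bβ l)) (Sum.inl (l + w)) = lam k l := by
  rw [Jop_bβ]
  simp [bβ, Finsupp.single_eq_same]

lemma Jop_bγ_apply (w k l : ℕ) : (Jop w k (bγ l)) (Sum.inr (l + w)) = mu w k l := by
  rw [Jop_bγ]
  simp [bγ, Finsupp.single_eq_same]

lemma bβ_apply (l : ℕ) : (bβ l) (Sum.inl l) = 1 := Finsupp.single_eq_same

lemma bγ_apply (l : ℕ) : (bγ l) (Sum.inr l) = 1 := Finsupp.single_eq_same

noncomputable def Mmat (w m : ℕ) : Matrix (Fin (2*m+2)) (Fin (2*m+2)) ℂ :=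
  Matrix.of fun i k => if (i : ℕ) ≤ m then lam (k : ℕ) (i : ℕ) else mu w (k : ℕ) ((i : ℕ) - (m+1))

lemma Mmat_mulVec (w m : ℕ) (t : Fin (2*m+2) → ℂ) (i : Fin (2*m+2)) :
    (Mmat w m).mulVecLin t i
      = ∑ k : Fin (2*m+2),
          (if (i : ℕ) ≤ m then lam (k : ℕ) (i : ℕ) else mu w (k : ℕ) ((i : ℕ) - (m+1))) * t k :=
  rfl

lemma Mmat_bijective (w m : ℕ) : Function.Bijective ((Mmat w m).mulVecLin) := by
  have hinj : Function.Injective ((Mmat w m).mulVecLin) := by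
    rw [← LinearMap.ker_eq_bot, LinearMap.ker_eq_bot']
    intro t ht
    refine key w m t (fun l hl => ?_) (fun l hl => ?_)
    · have h1 := congrFun ht ⟨l, by omega⟩
      rw [Mmat_mulVec] at h1
      simp only [if_pos hl, Pi.zero_apply] at h1
      rw [← h1]
      exact Finset.sum_congr rfl fun k _ => by ring
    · have h1 := congrFun ht ⟨l + (m+1), by omega⟩
      rw [Mmat_mulVec] at h1
      simp only [if_neg (show ¬ (l + (m+1) ≤ m) by omega), Nat.add_sub_cancel,
        Pi.zero_apply] at h1
      rw [← h1]
      exact Finset.sum_congr rfl fun k _ => by ring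
  exact ⟨hinj, LinearMap.injective_iff_surjective.mp hinj⟩

/-- Any linear map `φ : W → W` of weight `w ≥ 1` with `φ(γ_l) = c_l γ_{l+w}` and
`φ(β_l) = d_l β_{l+w}` restricts on `W_m` to a unique linear combination of the
restrictions of the `J^{w+k}(k)`, `0 ≤ k ≤ 2m+1`. -/
theorem phi_eq_lin_comb (w : ℕ) (hw : 1 ≤ w) (m : ℕ) (φ : Wsp →ₗ[ℂ] Wsp) (c d : ℕ → ℂ)
    (hγ : ∀ l, φ (bγ l) = c l • bγ (l + w)) (hβ : ∀ l, φ (bβ l) = d l • bβ (l + w)) :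
    ∃! t : Fin (2 * m + 2) → ℂ,
      ∀ x ∈ Wm m, φ x = ∑ k : Fin (2 * m + 2), t k • Jop w (k : ℕ) x := by
  set b : Fin (2*m+2) → ℂ :=
    fun i => if (i : ℕ) ≤ m then d (i : ℕ) else c ((i : ℕ) - (m+1)) with hbdef
  have hiff : ∀ t : Fin (2*m+2) → ℂ,
      (∀ x ∈ Wm m, φ x = ∑ k : Fin (2*m+2), t k • Jop w (k : ℕ) x)
        ↔ (Mmat w m).mulVecLin t = b := by
    intro t
    constructor
    · intro h
      funext i
      rw [Mmat_mulVec, hbdef]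
      by_cases hi : (i : ℕ) ≤ m
      · simp only [if_pos hi]
        have hmem : bβ (i : ℕ) ∈ Wm m := Submodule.subset_span ⟨(i : ℕ), hi, Or.inl rfl⟩
        have h0 := h _ hmem
        rw [hβ] at h0
        have h2 := congrFun (congrArg (fun f : Wsp => (f : (ℕ ⊕ ℕ) → ℂ)) h0)
          (Sum.inl ((i : ℕ) + w))
        simp only [Finsupp.coe_finset_sum, Finset.sum_apply, Finsupp.smul_apply,
          Jop_bβ_apply, bβ_apply, smul_eq_mul, mul_one] at h2
        rw [h2]
        exact Finset.sum_congr rfl fun k _ => by ring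
      · simp only [if_neg hi]
        have hmem : bγ ((i : ℕ) - (m+1)) ∈ Wm m :=
          Submodule.subset_span ⟨(i : ℕ) - (m+1), by have := i.isLt; omega, Or.inr rfl⟩
        have h0 := h _ hmem
        rw [hγ] at h0
        have h2 := congrFun (congrArg (fun f : Wsp => (f : (ℕ ⊕ ℕ) → ℂ)) h0)
          (Sum.inr (((i : ℕ) - (m+1)) + w))
        simp only [Finsupp.coe_finset_sum, Finset.sum_apply, Finsupp.smul_apply,
          Jop_bγ_apply, bγ_apply, smul_eq_mul, mul_one] at h2
        rw [h2]
        exact Finset.sum_congr rfl fun k _ => by ring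
    · intro h
      have hker : Wm m ≤ LinearMap.ker (φ - ∑ k : Fin (2*m+2), t k • Jop w (k : ℕ)) := by
        rw [Wm, Submodule.span_le]
        rintro x ⟨l, hl, hx | hx⟩ <;> subst hx <;>
          simp only [SetLike.mem_coe, LinearMap.mem_ker, LinearMap.sub_apply,
            LinearMap.sum_apply, LinearMap.smul_apply, sub_eq_zero]
        · have h1 := congrFun h ⟨l, by omega⟩
          rw [Mmat_mulVec] at h1
          simp only [hbdef, if_pos hl] at h1
          rw [hβ, Finset.sum_congr rfl (fun k _ => by rw [Jop_bβ, smul_smul]),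
            ← Finset.sum_smul]
          rw [Finset.sum_congr rfl (fun (k : Fin (2*m+2)) _ =>
            (mul_comm (lam (k : ℕ) l) (t k) : lam (k : ℕ) l * t k = t k * lam (k : ℕ) l).symm),
            h1]
        · have h1 := congrFun h ⟨l + (m+1), by omega⟩
          rw [Mmat_mulVec] at h1
          simp only [hbdef, if_neg (show ¬ (l + (m+1) ≤ m) by omega),
            Nat.add_sub_cancel] at h1
          rw [hγ, Finset.sum_congr rfl (fun k _ => by rw [Jop_bγ, smul_smul]),
            ← Finset.sum_smul]
          rw [Finset.sum_congr rfl (fun (k : Fin (2*m+2)) _ =>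
            (mul_comm (mu w (k : ℕ) l) (t k) : mu w (k : ℕ) l * t k = t k * mu w (k : ℕ) l).symm),
            h1]
      intro x hx
      have h0 := hker hx
      rw [LinearMap.mem_ker, LinearMap.sub_apply, sub_eq_zero] at h0
      rw [h0]
      simp [LinearMap.sum_apply]
  obtain ⟨t, ht, huniq⟩ := (Mmat_bijective w m).existsUnique b
  exact ⟨t, (hiff t).mpr ht, fun t' h' => huniq t' ((hiff t').mp h')⟩
end

section
/- Let a, b, c be elements of a vertex (super)algebra. Then :(:ab:)c: − :abc: = Σ_{k≥0} (1/(k+1)!) ( :(∂^{k+1}a)(b ∘_k c): + (−1)^{|a||b|} :(∂^{k+1}b)(a ∘_k c): ), where :abc: denotes the right-normalized triple Wick product :a(:bc:):. -/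
/-- Generalized binomial coefficient `C(m, l) = m(m−1)⋯(m−l+1)/l!` for `m ∈ ℤ`. -/
noncomputable def zc (m : ℤ) (l : ℕ) : ℂ :=
  (∏ i ∈ Finset.range l, ((m : ℂ) - (i : ℂ))) / (l.factorial : ℂ)

/-- The Koszul sign `(−1)^{|a||b|}` for parities `i, j ∈ ℤ/2`. -/
noncomputable def sgn (i j : ZMod 2) : ℂ := (-1 : ℂ) ^ ((i * j).val)

/-- A vertex superalgebra: a `ℤ/2`-graded `ℂ`-vector space with `ℤ`-indexed circle products
`∘_n`, a vacuum vector, a translation operator, satisfying truncation, vacuum, translation,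
grading axioms and the Borcherds identity (with Koszul signs). The Wick product is
`:ab: = a ∘_{−1} b`. -/
class VertexSuperAlg (V : Type) [AddCommGroup V] [Module ℂ V] where
  pr : ℤ → V →ₗ[ℂ] V →ₗ[ℂ] V
  vac : V
  T : Module.End ℂ V
  deg : ZMod 2 → Submodule ℂ V
  grading : ∀ v : V, ∃ v0 ∈ deg 0, ∃ v1 ∈ deg 1, v = v0 + v1
  vac_deg : vac ∈ deg 0
  pr_deg : ∀ (i j : ZMod 2) (n : ℤ) (a b : V), a ∈ deg i → b ∈ deg j → pr n a b ∈ deg (i + j)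
  T_deg : ∀ (i : ZMod 2) (a : V), a ∈ deg i → T a ∈ deg i
  trunc : ∀ a b : V, ∃ N : ℕ, ∀ n : ℕ, N ≤ n → pr (n : ℤ) a b = 0
  vac_left : ∀ (n : ℤ) (a : V), pr n vac a = if n = -1 then a else 0
  create : ∀ (a : V) (n : ℤ), 0 ≤ n → pr n a vac = 0
  create_neg_one : ∀ a : V, pr (-1) a vac = a
  T_def : ∀ a : V, T a = pr (-2) a vac
  T_deriv : ∀ (a b : V) (n : ℤ), pr n (T a) b = (-n : ℂ) • pr (n - 1) a b
  borcherds : ∀ (i j : ZMod 2) (a b c : V), a ∈ deg i → b ∈ deg j → ∀ m n k : ℤ,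
    (∑ᶠ l : ℕ, zc m l • pr (m + k - l) (pr (n + l) a b) c)
      = ∑ᶠ l : ℕ, ((-1 : ℂ) ^ l * zc n l) •
          (pr (m + n - l) a (pr (k + l) b c)
            - (sgn i j * (-1 : ℂ) ^ n) • pr (n + k - l) b (pr (m + l) a c))

open VertexSuperAlg

lemma zc_zero (l : ℕ) : zc 0 l = if l = 0 then 1 else 0 := by
  cases l with
  | zero => simp [zc]
  | succ n =>
    simp only [zc, Nat.succ_ne_zero, if_false]
    rw [Finset.prod_eq_zero (Finset.mem_range.2 (Nat.succ_pos n))]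
    · simp
    · simp

lemma fact_prod (k : ℕ) : (∏ i ∈ Finset.range k, ((1 : ℂ) + i)) = (k.factorial : ℂ) := by
  induction k with
  | zero => simp
  | succ n ih =>
    rw [Finset.prod_range_succ, ih, Nat.factorial_succ]
    push_cast
    ring

lemma zc_neg_one (l : ℕ) : zc (-1) l = (-1 : ℂ) ^ l := by
  have h : (∏ i ∈ Finset.range l, ((-1 : ℂ) - i)) = (-1)^l * l.factorial := by
    induction l with
    | zero => simp
    | succ n ih =>
      rw [Finset.prod_range_succ, ih, pow_succ, Nat.factorial_succ]
      push_cast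
      ring
  rw [zc]
  push_cast
  rw [h, mul_div_assoc, div_self (by exact_mod_cast l.factorial_ne_zero), mul_one]

lemma pr_T_pow {V : Type} [AddCommGroup V] [Module ℂ V] [VertexSuperAlg V]
    (a x : V) (m : ℕ) (n : ℤ) :
    pr n ((T ^ m) a) x = (∏ i ∈ Finset.range m, ((-n : ℂ) + i)) • pr (n - m) a x := by
  induction m generalizing a n with
  | zero => simp
  | succ m ih =>
    have h1 : (T ^ (m + 1)) a = (T ^ m) (T a) := by
      rw [pow_succ]; rfl
    rw [h1, ih (T a) n, T_deriv, smul_smul, Finset.prod_range_succ]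
    have h2 : n - m - 1 = n - (m + 1 : ℕ) := by push_cast; ring
    rw [h2]
    congr 1
    push_cast
    ring

lemma pr_T_pow_neg_one {V : Type} [AddCommGroup V] [Module ℂ V] [VertexSuperAlg V]
    (a x : V) (k : ℕ) :
    pr (-1) ((T ^ (k + 1)) a) x = ((k + 1).factorial : ℂ) • pr (-2 - k) a x := by
  rw [pr_T_pow]
  have h2 : (-1 : ℤ) - (k + 1 : ℕ) = -2 - k := by push_cast; ring
  rw [h2]
  congr 1
  rw [← fact_prod]
  norm_num

/-- Non-associativity of the Wick product: for homogeneous `a, b` of parities `i, j` and any `c`,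
`:(:ab:)c: − :abc: = Σ_{k≥0} (1/(k+1)!)(:(∂^{k+1}a)(b ∘_k c): + (−1)^{|a||b|} :(∂^{k+1}b)(a ∘_k c):)`,
where `:abc: = :a(:bc:):` is the right-normalized triple Wick product. -/
theorem wick_product_associator_formula (V : Type) [AddCommGroup V] [Module ℂ V]
    [VertexSuperAlg V] (i j : ZMod 2) (a b c : V)
    (ha : a ∈ deg (V := V) i) (hb : b ∈ deg (V := V) j) :
    pr (-1) (pr (-1) a b) c - pr (-1) a (pr (-1) b c)
      = ∑ᶠ k : ℕ, (((k + 1).factorial : ℂ))⁻¹ •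
          (pr (-1) ((T ^ (k + 1)) a) (pr (k : ℤ) b c)
            + sgn i j • pr (-1) ((T ^ (k + 1)) b) (pr (k : ℤ) a c)) := by
  obtain ⟨N1, hN1⟩ := trunc (V := V) b c
  obtain ⟨N2, hN2⟩ := trunc (V := V) a c
  set N := max N1 N2 with hN
  have hbc : ∀ n : ℕ, N ≤ n → pr ((n : ℤ)) b c = 0 := fun n hn =>
    hN1 n (le_trans (le_max_left _ _) hn)
  have hac : ∀ n : ℕ, N ≤ n → pr ((n : ℤ)) a c = 0 := fun n hn =>
    hN2 n (le_trans (le_max_right _ _) hn)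
  -- canonical term
  set F : ℕ → V := fun k =>
    pr (-2 - (k : ℤ)) a (pr (k : ℤ) b c) + sgn i j • pr (-2 - (k : ℤ)) b (pr (k : ℤ) a c)
    with hF
  have hB := borcherds i j a b c ha hb 0 (-1) (-1)
  -- LHS of Borcherds
  have hL : (∑ᶠ l : ℕ, zc 0 l • pr (0 + -1 - (l : ℤ)) (pr (-1 + (l : ℤ)) a b) c)
      = pr (-1) (pr (-1) a b) c := by
    rw [finsum_eq_single _ 0]
    · norm_num [zc_zero]
    · intro x hx
      simp [zc_zero, hx]
  rw [hL] at hB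
  -- simplify Borcherds RHS termwise
  set A : ℕ → V := fun l => pr (-1 - (l : ℤ)) a (pr (-1 + (l : ℤ)) b c) with hA
  set B : ℕ → V := fun l => sgn i j • pr (-2 - (l : ℤ)) b (pr ((l : ℤ)) a c) with hB2
  have hg : ∀ l : ℕ, ((-1 : ℂ) ^ l * zc (-1) l) •
      (pr ((0 : ℤ) + -1 - (l : ℤ)) a (pr ((-1 : ℤ) + (l : ℤ)) b c)
        - (sgn i j * (-1 : ℂ) ^ (-1 : ℤ)) • pr ((-1 : ℤ) + -1 - (l : ℤ)) b
            (pr ((0 : ℤ) + (l : ℤ)) a c))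
      = A l + B l := by
    intro l
    have h1 : ((-1 : ℂ) ^ l * zc (-1) l) = 1 := by
      rw [zc_neg_one, ← mul_pow]; norm_num
    have h2 : ((-1 : ℂ) ^ (-1 : ℤ)) = -1 := by norm_num
    have e1 : (0 : ℤ) + -1 - (l : ℤ) = -1 - l := by ring
    have e2 : (-1 : ℤ) + -1 - (l : ℤ) = -2 - l := by ring
    have e3 : (0 : ℤ) + (l : ℤ) = l := by ring
    rw [h1, h2, one_smul, e1, e2, e3, hA, hB2]
    simp only [mul_neg_one, neg_smul, sub_neg_eq_add]
  rw [finsum_congr hg] at hB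
  -- reduce finsum to a finite sum
  have hsupp : Function.support (fun l => A l + B l) ⊆ ↑(Finset.range (N + 1)) := by
    intro l hl
    by_contra hcon
    simp only [Finset.coe_range, Set.mem_Iio, not_lt] at hcon
    apply hl
    have h1 : pr ((-1 : ℤ) + (l : ℤ)) b c = 0 := by
      have e : (-1 : ℤ) + (l : ℤ) = ((l - 1 : ℕ) : ℤ) := by
        have : 1 ≤ l := by omega
        push_cast [this]; ring
      rw [e]; exact hbc _ (by omega)
    have h2 : pr ((l : ℤ)) a c = 0 := hac _ (by omega)
    simp [hA, hB2, h1, h2]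
  rw [finsum_eq_sum_of_support_subset _ hsupp] at hB
  rw [Finset.sum_add_distrib, Finset.sum_range_succ' A, Finset.sum_range_succ B] at hB
  have hBN : B N = 0 := by simp [hB2, hac N le_rfl]
  rw [hBN, add_zero] at hB
  have hA0 : A 0 = pr (-1) a (pr (-1) b c) := by simp [hA]
  rw [hA0] at hB
  have hAF : ∀ k ∈ Finset.range N, A (k + 1) + B k = F k := by
    intro k _
    have e1 : (-1 : ℤ) - ((k + 1 : ℕ) : ℤ) = -2 - k := by push_cast; ring
    have e2 : (-1 : ℤ) + ((k + 1 : ℕ) : ℤ) = k := by push_cast; ring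
    simp only [hA, hB2, hF, e1, e2]
  -- the target RHS
  have hh : ∀ k : ℕ, (((k + 1).factorial : ℂ))⁻¹ •
      (pr (-1) ((T ^ (k + 1)) a) (pr (k : ℤ) b c)
        + sgn i j • pr (-1) ((T ^ (k + 1)) b) (pr (k : ℤ) a c)) = F k := by
    intro k
    have hfne : ((k + 1).factorial : ℂ) ≠ 0 := by
      exact_mod_cast (k + 1).factorial_ne_zero
    rw [pr_T_pow_neg_one, pr_T_pow_neg_one, smul_comm (sgn i j), smul_add,
      smul_smul, smul_smul, inv_mul_cancel₀ hfne, one_smul, one_smul]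
  rw [finsum_congr hh]
  have hsupp2 : Function.support F ⊆ ↑(Finset.range N) := by
    intro k hk
    by_contra hcon
    simp only [Finset.coe_range, Set.mem_Iio, not_lt] at hcon
    exact hk (by simp [hF, hbc k hcon, hac k hcon])
  rw [finsum_eq_sum_of_support_subset _ hsupp2]
  have hsum : (∑ k ∈ Finset.range N, A (k + 1)) + ∑ k ∈ Finset.range N, B k
      = ∑ k ∈ Finset.range N, F k := by
    rw [← Finset.sum_add_distrib]
    exact Finset.sum_congr rfl hAF
  rw [hB]
  abel_nf
  rw [← hsum]
end
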